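/- Let μ₁,…,μₙ and δ₁,…,δₙ be complex numbers in the closed upper half plane. Extend these to lists of length 2n by setting μ_{n+i} = μ̄ᵢ and δ_{n+i} = δ̄ᵢ for 1 ≤ i ≤ n. Then for any permutation σ of {1,…,2n} there exists a permutation π of {1,…,n} such that 2∑_{i=1}^{n} |μᵢ − δ_{π(i)}|² ≤ ∑_{i=1}^{2n} |μᵢ − δ_{σ(i)}|². -/

import Mathlib

noncomputable section

/-- Key fact: for `a, b` in the closed upper half plane, `|a - b| ≤ |conj a - b|`. -/
lemma key_sq {a b : ℂ} (ha : 0 ≤ a.im) (hb : 0 ≤ b.im) :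
    ‖a - b‖ ^ 2 ≤ ‖(starRingEnd ℂ) a - b‖ ^ 2 := by
  rw [Complex.sq_norm, Complex.sq_norm]
  simp only [Complex.normSq_apply, Complex.sub_re, Complex.sub_im, Complex.conj_re,
    Complex.conj_im]
  nlinarith [mul_nonneg ha hb]

theorem perm_halving {n : ℕ} (mu delta : Fin n → ℂ)
    (hmu : ∀ i, 0 ≤ (mu i).im) (hdelta : ∀ i, 0 ≤ (delta i).im)
    (sigma : Equiv.Perm (Fin n ⊕ Fin n)) :
    ∃ π : Equiv.Perm (Fin n),
      2 * ∑ i, ‖mu i - delta (π i)‖ ^ 2 ≤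
        ∑ i : Fin n ⊕ Fin n,
          ‖Sum.elim mu (fun j => starRingEnd ℂ (mu j)) i -
              Sum.elim delta (fun j => starRingEnd ℂ (delta j)) (sigma i)‖ ^ 2 := by
  classical
  set c : Fin n → Fin n → ℝ := fun i j => ‖mu i - delta j‖ ^ 2 with hc
  set p : Fin n ⊕ Fin n → Fin n := Sum.elim id id with hp
  -- pointwise bound
  have hpoint : ∀ k : Fin n ⊕ Fin n,
      c (p k) (p (sigma k)) ≤
        ‖Sum.elim mu (fun j => starRingEnd ℂ (mu j)) k -
          Sum.elim delta (fun j => starRingEnd ℂ (delta j)) (sigma k)‖ ^ 2 := by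
    intro k
    have habs : ∀ x y : ℂ, ‖starRingEnd ℂ x - starRingEnd ℂ y‖ = ‖x - y‖ := by
      intro x y
      rw [← map_sub, Complex.norm_conj]
    rcases k with i | i <;> rcases hσ : sigma _ with j | j <;>
      simp only [Sum.elim_inl, Sum.elim_inr, hσ, hp, hc, id]
    · exact le_rfl
    · -- |mu i - conj (delta j)| = |conj mu i - delta j| ≥ |mu i - delta j|
      have : ‖mu i - starRingEnd ℂ (delta j)‖ =
          ‖starRingEnd ℂ (mu i) - delta j‖ := by
        rw [← habs (mu i) (starRingEnd ℂ (delta j))]; simp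
      rw [this]
      exact key_sq (hmu i) (hdelta j)
    · exact key_sq (hmu i) (hdelta j)
    · rw [habs]
  -- the doubly stochastic matrix
  set M : Matrix (Fin n) (Fin n) ℝ := fun i j =>
    ((Finset.univ.filter (fun k => p k = i ∧ p (sigma k) = j)).card : ℝ) / 2 with hM
  have hfiber : ∀ i : Fin n,
      (Finset.univ.filter (fun k : Fin n ⊕ Fin n => p k = i)).card = 2 := by
    intro i
    have : (Finset.univ.filter (fun k : Fin n ⊕ Fin n => p k = i)) =
        {Sum.inl i, Sum.inr i} := by
      ext k; rcases k with j | j <;> simp [hp, eq_comm]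
    rw [this]
    simp
  have hrow : ∀ i : Fin n,
      ∑ j, ((Finset.univ.filter (fun k => p k = i ∧ p (sigma k) = j)).card : ℝ) = 2 := by
    intro i
    rw [← Nat.cast_sum]
    norm_cast
    have := Finset.card_eq_sum_card_fiberwise
      (s := Finset.univ.filter (fun k : Fin n ⊕ Fin n => p k = i)) (t := Finset.univ)
      (f := fun k => p (sigma k)) (fun x _ => Finset.mem_univ _)
    rw [hfiber i] at this
    simp only [Finset.filter_filter] at this
    exact this.symm
  have hcolfiber : ∀ j : Fin n,
      (Finset.univ.filter (fun k : Fin n ⊕ Fin n => p (sigma k) = j)).card = 2 := by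
    intro j
    rw [← hfiber j]
    apply Finset.card_bij (fun k _ => sigma k)
    · intro k hk; simp at hk ⊢; exact hk
    · intro a _ b _ h; exact sigma.injective h
    · intro b hb
      refine ⟨sigma.symm b, ?_, by simp⟩
      simp at hb ⊢; simpa using hb
  have hcol : ∀ j : Fin n,
      ∑ i, ((Finset.univ.filter (fun k => p k = i ∧ p (sigma k) = j)).card : ℝ) = 2 := by
    intro j
    rw [← Nat.cast_sum]
    norm_cast
    have := Finset.card_eq_sum_card_fiberwise
      (s := Finset.univ.filter (fun k : Fin n ⊕ Fin n => p (sigma k) = j)) (t := Finset.univ)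
      (f := fun k => p k) (fun x _ => Finset.mem_univ _)
    rw [hcolfiber j] at this
    simp only [Finset.filter_filter, and_comm] at this
    exact this.symm
  have hMds : M ∈ doublyStochastic ℝ (Fin n) := by
    rw [mem_doublyStochastic_iff_sum]
    refine ⟨fun i j => by positivity, fun i => ?_, fun j => ?_⟩
    · simp only [hM, ← Finset.sum_div, hrow i]; norm_num
    · simp only [hM, ← Finset.sum_div, hcol j]; norm_num
  obtain ⟨w, hw0, hw1, hwM⟩ := exists_eq_sum_perm_of_mem_doublyStochastic hMds
  -- partition identity
  have hpartition : ∑ k : Fin n ⊕ Fin n, c (p k) (p (sigma k)) =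
      ∑ i, ∑ j, ((Finset.univ.filter
        (fun k => p k = i ∧ p (sigma k) = j)).card : ℝ) * c i j := by
    rw [← Finset.sum_fiberwise (Finset.univ : Finset (Fin n ⊕ Fin n))
      (fun k : Fin n ⊕ Fin n => (p k, p (sigma k))) (fun k => c (p k) (p (sigma k)))]
    rw [← Fintype.sum_prod_type']
    apply Finset.sum_congr rfl
    intro q _
    have hq : (Finset.univ.filter (fun k : Fin n ⊕ Fin n => (p k, p (sigma k)) = q)) =
        Finset.univ.filter (fun k => p k = q.1 ∧ p (sigma k) = q.2) := by
      apply Finset.filter_congr; intro k _; simp [Prod.ext_iff]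
    rw [hq, Finset.sum_congr rfl (fun k hk => ?_), Finset.sum_const, nsmul_eq_mul]
    simp only [Finset.mem_filter] at hk
    rw [hk.2.1, hk.2.2]
  -- T = ∑ M i j * c i j
  set T : ℝ := ∑ i, ∑ j, M i j * c i j with hT
  -- T as convex combination
  have hperm : ∀ (τ : Equiv.Perm (Fin n)) (i : Fin n),
      ∑ j, (τ.permMatrix ℝ) i j * c i j = c i (τ i) := by
    intro τ i
    simp [Equiv.Perm.permMatrix, PEquiv.toMatrix_apply, Equiv.toPEquiv_apply, ite_mul]
  have hTw : T = ∑ τ : Equiv.Perm (Fin n), w τ * ∑ i, c i (τ i) := by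
    have hMij : ∀ i j, M i j = ∑ τ : Equiv.Perm (Fin n), w τ * (τ.permMatrix ℝ) i j := by
      intro i j
      rw [← hwM]
      simp [Matrix.sum_apply]
    calc T = ∑ i, ∑ j, ∑ τ : Equiv.Perm (Fin n), w τ * ((τ.permMatrix ℝ) i j * c i j) := by
          simp_rw [hT, hMij, Finset.sum_mul, mul_assoc]
      _ = ∑ i, ∑ τ : Equiv.Perm (Fin n), ∑ j, w τ * ((τ.permMatrix ℝ) i j * c i j) := by
          exact Finset.sum_congr rfl fun i _ => by rw [Finset.sum_comm]
      _ = ∑ τ : Equiv.Perm (Fin n), ∑ i, ∑ j, w τ * ((τ.permMatrix ℝ) i j * c i j) :=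
          by rw [Finset.sum_comm]
      _ = ∑ τ : Equiv.Perm (Fin n), w τ * ∑ i, c i (τ i) := by
          refine Finset.sum_congr rfl fun τ _ => ?_
          simp_rw [← Finset.mul_sum]
          congr 1
          exact Finset.sum_congr rfl fun i _ => hperm τ i
  -- extract a permutation at most the average
  have hex : ∃ τ : Equiv.Perm (Fin n), ∑ i, c i (τ i) ≤ T := by
    by_contra h
    push_neg at h
    obtain ⟨τ₀, hτ₀⟩ : ∃ τ : Equiv.Perm (Fin n), 0 < w τ := by
      by_contra h'
      push_neg at h'
      have h0 : ∑ σ : Equiv.Perm (Fin n), w σ = 0 :=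
        Finset.sum_eq_zero fun σ _ => le_antisymm (h' σ) (hw0 σ)
      rw [hw1] at h0; norm_num at h0
    have hlt : ∑ τ : Equiv.Perm (Fin n), w τ * T <
        ∑ τ : Equiv.Perm (Fin n), w τ * ∑ i, c i (τ i) := by
      apply Finset.sum_lt_sum
      · intro τ _; exact mul_le_mul_of_nonneg_left (h τ).le (hw0 τ)
      · exact ⟨τ₀, Finset.mem_univ _, mul_lt_mul_of_pos_left (h τ₀) hτ₀⟩
    rw [← Finset.sum_mul, hw1, one_mul, ← hTw] at hlt
    exact lt_irrefl T hlt
  obtain ⟨τ, hτ⟩ := hex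
  refine ⟨τ, ?_⟩
  have h2T : 2 * T = ∑ k : Fin n ⊕ Fin n, c (p k) (p (sigma k)) := by
    rw [hpartition, hT, Finset.mul_sum]
    refine Finset.sum_congr rfl fun i _ => ?_
    rw [Finset.mul_sum]
    refine Finset.sum_congr rfl fun j _ => ?_
    simp only [hM]
    ring
  calc 2 * ∑ i, c i (τ i) ≤ 2 * T := by linarith
    _ = ∑ k : Fin n ⊕ Fin n, c (p k) (p (sigma k)) := h2T
    _ ≤ _ := Finset.sum_le_sum fun k _ => hpoint k
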